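/- Let h ≥ 1 and let m_1,…,m_h, n_1,…,n_h be positive integers, and let G = NSG(m_1,…,m_h; n_1,…,n_h). Then the multiplicity of −1 as an eigenvalue of the adjacency matrix of G equals Σ_{i=1}^{h} (n_i − 1) + 1 if m_h = 1, and equals Σ_{i=1}^{h} (n_i − 1) if m_h ≥ 2. -/

import Mathlib

/-- The multiplicity of `μ` as an eigenvalue of `G`: the dimension of
the kernel of `A(G) - μ I`. -/
noncomputable def SimpleGraph.eigMult {V : Type*} [Fintype V] (G : SimpleGraph V) (μ : ℝ) : ℕ :=
  letI := Classical.decEq V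
  letI : DecidableRel G.Adj := Classical.decRel _
  Module.finrank ℝ (LinearMap.ker (Matrix.toLin' (G.adjMatrix ℝ - μ • (1 : Matrix V V ℝ))))

/-- The nested split graph `NSG(m₁,…,m_h; n₁,…,n_h)`: the vertex set is the disjoint union
of `U₁,…,U_h, V₁,…,V_h` with `|Uᵢ| = mᵢ`, `|Vᵢ| = nᵢ`; the `Vᵢ`'s form a clique,
the `Uᵢ`'s form an independent set, and a vertex of `Uᵢ` is adjacent to a vertex of `Vⱼ`
iff `j ≤ i`. -/
def NSG (h : ℕ) (m n : Fin h → ℕ) :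
    SimpleGraph ((Σ i : Fin h, Fin (m i)) ⊕ (Σ i : Fin h, Fin (n i))) where
  Adj x y :=
    match x, y with
    | Sum.inl _, Sum.inl _ => False
    | Sum.inl ⟨i, _⟩, Sum.inr ⟨j, _⟩ => j ≤ i
    | Sum.inr ⟨j, _⟩, Sum.inl ⟨i, _⟩ => j ≤ i
    | Sum.inr a, Sum.inr b => a ≠ b
  symm := by
    constructor
    rintro (⟨i, a⟩ | ⟨i, a⟩) (⟨j, b⟩ | ⟨j, b⟩) hadj
    · exact hadj
    · exact hadj
    · exact hadj
    · exact Ne.symm hadj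
  loopless := by
    constructor
    rintro (⟨i, a⟩ | ⟨i, a⟩) hadj
    · exact hadj
    · exact hadj rfl

namespace NSGproof
open Matrix

set_option linter.unusedSectionVars false

abbrev Wt (h : ℕ) (m n : Fin h → ℕ) := (Σ i : Fin h, Fin (m i)) ⊕ (Σ i : Fin h, Fin (n i))

variable {h : ℕ} {m n : Fin h → ℕ}

def sv (z : Wt h m n → ℝ) (j : Fin h) : ℝ := ∑ b : Fin (n j), z (Sum.inr ⟨j, b⟩)
def rv (z : Wt h m n → ℝ) (i : Fin h) : ℝ := ∑ a : Fin (m i), z (Sum.inl ⟨i, a⟩)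
def tv (z : Wt h m n → ℝ) (i : Fin h) : ℝ := ∑ j : Fin h, if j ≤ i then sv z j else 0
def qv (z : Wt h m n → ℝ) (j : Fin h) : ℝ := ∑ i : Fin h, if j ≤ i then rv z i else 0
def tot (z : Wt h m n → ℝ) : ℝ := ∑ j : Fin h, sv z j

def lst (hh : 0 < h) : Fin h := ⟨h - 1, by omega⟩

lemma lst_val (hh : 0 < h) : ((lst hh : Fin h) : ℕ) = h - 1 := rfl

lemma le_lst (hh : 0 < h) (i : Fin h) : i ≤ lst hh := by
  have := i.isLt; rw [Fin.le_def, lst_val]; omega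

lemma lst_le_iff (hh : 0 < h) (i : Fin h) : lst hh ≤ i ↔ i = lst hh := by
  have := i.isLt; rw [Fin.le_def, Fin.ext_iff, lst_val]; constructor <;> (intro; omega)

lemma tv_eq (z : Wt h m n → ℝ) (j : Fin h) :
    tv z j = (∑ j' : Fin h, if j' < j then sv z j' else 0) + sv z j := by
  rw [tv]
  have : ∀ j' : Fin h, (if j' ≤ j then sv z j' else 0)
      = (if j' < j then sv z j' else 0) + (if j' = j then sv z j' else 0) := by
    intro j'
    simp only [Fin.le_def, Fin.lt_def, Fin.ext_iff]
    split_ifs <;> first | (exfalso; omega) | ring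
  rw [Finset.sum_congr rfl fun j' _ => this j', Finset.sum_add_distrib,
    Finset.sum_ite_eq' Finset.univ j (sv z), if_pos (Finset.mem_univ j)]

lemma tv_lst (hh : 0 < h) (z : Wt h m n → ℝ) : tv z (lst hh) = tot z := by
  rw [tv, tot]
  exact Finset.sum_congr rfl fun j _ => if_pos (le_lst hh j)

lemma rv_eq (z : Wt h m n → ℝ) (hz1 : ∀ i (a : Fin (m i)), z (Sum.inl ⟨i, a⟩) + tv z i = 0)
    (i : Fin h) : rv z i = -((m i : ℝ) * tv z i) := by
  rw [rv]
  have : ∀ a : Fin (m i), z (Sum.inl ⟨i, a⟩) = -tv z i := fun a => by linarith [hz1 i a]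
  rw [Finset.sum_congr rfl fun a _ => this a]
  simp [mul_comm]

lemma qv_step (z : Wt h m n → ℝ) (j : Fin h) (hj : (j : ℕ) + 1 < h) :
    qv z j = qv z ⟨(j : ℕ) + 1, hj⟩ + rv z j := by
  rw [qv, qv]
  have : ∀ i : Fin h, (if j ≤ i then rv z i else 0)
      = (if (⟨(j : ℕ) + 1, hj⟩ : Fin h) ≤ i then rv z i else 0) + (if i = j then rv z i else 0) := by
    intro i
    simp only [Fin.le_def, Fin.ext_iff]
    split_ifs <;> first | (exfalso; omega) | ring
  rw [Finset.sum_congr rfl fun i _ => this i, Finset.sum_add_distrib,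
    Finset.sum_ite_eq' Finset.univ j (rv z), if_pos (Finset.mem_univ j)]

lemma qv_lst (hh : 0 < h) (z : Wt h m n → ℝ) : qv z (lst hh) = rv z (lst hh) := by
  rw [qv]
  have : ∀ i : Fin h, (if lst hh ≤ i then rv z i else 0) = (if i = lst hh then rv z i else 0) := by
    intro i; exact if_congr (lst_le_iff hh i) rfl rfl
  rw [Finset.sum_congr rfl fun i _ => this i,
    Finset.sum_ite_eq' Finset.univ (lst hh) (rv z), if_pos (Finset.mem_univ _)]

lemma tv_zero_of_ne (hh : 0 < h) (hm : ∀ i, 1 ≤ m i) (z : Wt h m n → ℝ)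
    (hz1 : ∀ i (a : Fin (m i)), z (Sum.inl ⟨i, a⟩) + tv z i = 0)
    (hz2 : ∀ j, qv z j + tot z = 0)
    (j : Fin h) (hjl : j ≠ lst hh) : tv z j = 0 := by
  have hj : (j : ℕ) + 1 < h := by
    have := j.isLt
    have : (j : ℕ) ≠ h - 1 := fun hc => hjl (by rw [Fin.ext_iff, lst_val]; omega)
    omega
  have h1 := qv_step z j hj
  have h2 := hz2 j
  have h3 := hz2 ⟨(j : ℕ) + 1, hj⟩
  have hr : rv z j = 0 := by linarith
  have := rv_eq z hz1 j
  have hmj : (0 : ℝ) < (m j : ℕ) := by exact_mod_cast hm j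
  nlinarith

lemma tv_lst_mul (hh : 0 < h) (z : Wt h m n → ℝ)
    (hz1 : ∀ i (a : Fin (m i)), z (Sum.inl ⟨i, a⟩) + tv z i = 0)
    (hz2 : ∀ j, qv z j + tot z = 0) :
    (m (lst hh) : ℝ) * tv z (lst hh) = tv z (lst hh) := by
  have h1 := qv_lst hh z
  have h2 := hz2 (lst hh)
  have h3 := rv_eq z hz1 (lst hh)
  have h4 := tv_lst hh z
  linarith

lemma sv_zero_of_tv (z : Wt h m n → ℝ) (ht : ∀ i, tv z i = 0) (j : Fin h) : sv z j = 0 := by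
  have key : ∀ k : ℕ, ∀ j : Fin h, (j : ℕ) = k → sv z j = 0 := by
    intro k
    induction k using Nat.strong_induction_on with
    | _ k IH =>
      intro j hjk
      have h1 := tv_eq z j
      rw [ht j] at h1
      have h0 : (∑ j' : Fin h, if j' < j then sv z j' else 0) = 0 :=
        Finset.sum_eq_zero fun j' _ => by
          split_ifs with hlt
          · exact IH (j' : ℕ) (by rw [← hjk]; exact hlt) j' rfl
          · rfl
      linarith
  exact key (j : ℕ) j rfl

lemma sv_zero_of_tv' (hh : 0 < h) (z : Wt h m n → ℝ)
    (ht : ∀ i, i ≠ lst hh → tv z i = 0) (j : Fin h) (hjl : j ≠ lst hh) : sv z j = 0 := by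
  have key : ∀ k : ℕ, ∀ j : Fin h, (j : ℕ) = k → j ≠ lst hh → sv z j = 0 := by
    intro k
    induction k using Nat.strong_induction_on with
    | _ k IH =>
      intro j hjk hjl
      have h1 := tv_eq z j
      rw [ht j hjl] at h1
      have h0 : (∑ j' : Fin h, if j' < j then sv z j' else 0) = 0 :=
        Finset.sum_eq_zero fun j' _ => by
          split_ifs with hlt
          · refine IH (j' : ℕ) (by rw [← hjk]; exact hlt) j' rfl ?_
            have hjv : (j : ℕ) < h - 1 := by
              have := j.isLt
              have : (j : ℕ) ≠ h - 1 := fun hc => hjl (by rw [Fin.ext_iff, lst_val]; omega)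
              omega
            have : (j' : ℕ) < (j : ℕ) := hlt
            exact fun hc => by rw [Fin.ext_iff, lst_val] at hc; omega
          · rfl
      linarith
  exact key (j : ℕ) j rfl hjl

/-- The linear map used for the case `m_last ≥ 2`. -/
noncomputable def LA : (Wt h m n → ℝ) →ₗ[ℝ]
    ((Σ i : Fin h, Fin (m i)) → ℝ) × (Fin h → ℝ) where
  toFun z := (fun u => z (Sum.inl u), fun j => sv z j)
  map_add' x y := by
    refine Prod.ext ?_ ?_ <;> funext w <;> simp [sv, Finset.sum_add_distrib]
  map_smul' c x := by
    refine Prod.ext ?_ ?_ <;> funext w <;> simp [sv, Finset.mul_sum]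

lemma LA_surj (hn : ∀ j, 1 ≤ n j) :
    Function.Surjective (LA (h := h) (m := m) (n := n)) := by
  rintro ⟨g, f⟩
  refine ⟨Sum.elim g (fun v => f v.1 / (n v.1 : ℝ)), Prod.ext rfl ?_⟩
  funext j
  have hnj : ((n j : ℝ)) ≠ 0 := by have := hn j; positivity
  simp [LA, sv, Finset.sum_const, mul_comm]
  field_simp


/-- The linear map used for the case `m_last = 1`. -/
noncomputable def LB (hh : 0 < h) : (Wt h m n → ℝ) →ₗ[ℝ]
    ((Σ i : Fin h, Fin (m i)) → ℝ) × ({j : Fin h // j ≠ lst hh} → ℝ) where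
  toFun z := (fun u => z (Sum.inl u) + (if u.1 = lst hh then sv z (lst hh) else 0),
    fun j => sv z j.1)
  map_add' x y := by
    refine Prod.ext ?_ ?_ <;> funext w
    · by_cases hw : w.1 = lst hh <;> simp [sv, hw, Finset.sum_add_distrib] <;> ring
    · simp [sv, Finset.sum_add_distrib]
  map_smul' c x := by
    refine Prod.ext ?_ ?_ <;> funext w
    · by_cases hw : w.1 = lst hh <;> simp [sv, hw, Finset.mul_sum, mul_add]
    · simp [sv, Finset.mul_sum]

lemma LB_surj (hh : 0 < h) (hn : ∀ j, 1 ≤ n j) :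
    Function.Surjective (LB (h := h) (m := m) (n := n) hh) := by
  rintro ⟨g, f⟩
  set y : (Σ j : Fin h, Fin (n j)) → ℝ :=
    fun v => (if hv : v.1 = lst hh then 0 else f ⟨v.1, hv⟩) / (n v.1 : ℝ) with hy
  have hsv : ∀ j : Fin h, sv (Sum.elim g y : Wt h m n → ℝ) j
      = (if hv : j = lst hh then 0 else f ⟨j, hv⟩) := by
    intro j
    have hnj : ((n j : ℝ)) ≠ 0 := by have := hn j; positivity
    have hconst : ∀ (k : ℕ) (c : ℝ), (∑ _b : Fin k, c) = k * c := fun k c => by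
      simp [mul_comm]
    have hstep : sv (Sum.elim g y : Wt h m n → ℝ) j
        = ∑ _b : Fin (n j), (if hv : j = lst hh then 0 else f ⟨j, hv⟩) / (n j : ℝ) := rfl
    rw [hstep, hconst]
    split_ifs with hj <;> field_simp
  refine ⟨Sum.elim g y, Prod.ext ?_ ?_⟩
  · funext u
    simp only [LB, LinearMap.coe_mk, AddHom.coe_mk, Sum.elim_inl]
    rw [hsv (lst hh), dif_pos rfl]
    simp
  · funext j
    simp only [LB, LinearMap.coe_mk, AddHom.coe_mk]
    rw [hsv j.1, dif_neg j.2]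


section matrixlemmas
variable [DecidableEq (Wt h m n)] [DecidableRel (NSG h m n).Adj]

lemma entry_inl_inl (u u' : Σ i : Fin h, Fin (m i)) :
    ((NSG h m n).adjMatrix ℝ + 1) (Sum.inl u) (Sum.inl u')
      = if u = u' then 1 else 0 := by
  have hna : ¬ (NSG h m n).Adj (Sum.inl u) (Sum.inl u') := by
    obtain ⟨i, a⟩ := u; obtain ⟨i', a'⟩ := u'; exact fun hx => hx
  by_cases huu : u = u' <;> simp [Matrix.add_apply, Matrix.one_apply, hna, huu]

lemma entry_inl_inr (i : Fin h) (a : Fin (m i)) (j : Fin h) (b : Fin (n j)) :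
    ((NSG h m n).adjMatrix ℝ + 1) (Sum.inl ⟨i, a⟩) (Sum.inr ⟨j, b⟩)
      = if j ≤ i then 1 else 0 := by
  have : (NSG h m n).Adj (Sum.inl ⟨i, a⟩) (Sum.inr ⟨j, b⟩) ↔ j ≤ i := Iff.rfl
  simp [Matrix.add_apply, Matrix.one_apply, this]

lemma entry_inr_inl (i : Fin h) (a : Fin (m i)) (j : Fin h) (b : Fin (n j)) :
    ((NSG h m n).adjMatrix ℝ + 1) (Sum.inr ⟨j, b⟩) (Sum.inl ⟨i, a⟩)
      = if j ≤ i then 1 else 0 := by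
  have : (NSG h m n).Adj (Sum.inr ⟨j, b⟩) (Sum.inl ⟨i, a⟩) ↔ j ≤ i := Iff.rfl
  simp [Matrix.add_apply, Matrix.one_apply, this]

lemma entry_inr_inr (v v' : Σ j : Fin h, Fin (n j)) :
    ((NSG h m n).adjMatrix ℝ + 1) (Sum.inr v) (Sum.inr v') = 1 := by
  have : (NSG h m n).Adj (Sum.inr v) (Sum.inr v') ↔ v ≠ v' := Iff.rfl
  by_cases hv : v = v' <;> simp [Matrix.add_apply, Matrix.one_apply, this, hv]

lemma mulVec_inl (z : Wt h m n → ℝ) (i : Fin h) (a : Fin (m i)) :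
    (((NSG h m n).adjMatrix ℝ + 1) *ᵥ z) (Sum.inl ⟨i, a⟩)
      = z (Sum.inl ⟨i, a⟩) + tv z i := by
  rw [Matrix.mulVec, dotProduct, Fintype.sum_sum_type]
  congr 1
  · rw [Fintype.sum_eq_single (⟨i, a⟩ : Σ i : Fin h, Fin (m i))]
    · rw [entry_inl_inl]; simp
    · intro u hu
      rw [entry_inl_inl, if_neg (by simpa [eq_comm] using hu), zero_mul]
  · rw [tv, ← Finset.univ_sigma_univ, Finset.sum_sigma]
    refine Finset.sum_congr rfl fun j _ => ?_
    simp only [entry_inl_inr, ite_mul, one_mul, zero_mul]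
    split_ifs with hji <;> simp [sv]

lemma mulVec_inr (z : Wt h m n → ℝ) (j : Fin h) (b : Fin (n j)) :
    (((NSG h m n).adjMatrix ℝ + 1) *ᵥ z) (Sum.inr ⟨j, b⟩)
      = qv z j + tot z := by
  rw [Matrix.mulVec, dotProduct, Fintype.sum_sum_type]
  congr 1
  · rw [qv, ← Finset.univ_sigma_univ, Finset.sum_sigma]
    refine Finset.sum_congr rfl fun i _ => ?_
    simp only [entry_inr_inl, ite_mul, one_mul, zero_mul]
    split_ifs with hji <;> simp [rv]
  · rw [tot, ← Finset.univ_sigma_univ, Finset.sum_sigma]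
    refine Finset.sum_congr rfl fun j' _ => ?_
    simp only [sv]
    refine Finset.sum_congr rfl fun b' _ => ?_
    rw [entry_inr_inr, one_mul]

lemma mulVec_zero_iff (hn : ∀ j, 1 ≤ n j) (z : Wt h m n → ℝ) :
    ((NSG h m n).adjMatrix ℝ + 1) *ᵥ z = 0
      ↔ (∀ i (a : Fin (m i)), z (Sum.inl ⟨i, a⟩) + tv z i = 0)
        ∧ (∀ j, qv z j + tot z = 0) := by
  constructor
  · intro hz
    constructor
    · intro i a
      rw [← mulVec_inl z i a, hz]; rfl
    · intro j
      rw [← mulVec_inr z j ⟨0, hn j⟩, hz]; rfl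
  · rintro ⟨h1, h2⟩
    funext w
    match w with
    | Sum.inl ⟨i, a⟩ => rw [mulVec_inl]; exact h1 i a
    | Sum.inr ⟨j, b⟩ => rw [mulVec_inr]; exact h2 j

lemma kerA_iff (hh : 0 < h) (hm : ∀ i, 1 ≤ m i) (hn : ∀ j, 1 ≤ n j)
    (hm2 : m (lst hh) ≠ 1) (z : Wt h m n → ℝ) :
    ((NSG h m n).adjMatrix ℝ + 1) *ᵥ z = 0
      ↔ (∀ u : Σ i : Fin h, Fin (m i), z (Sum.inl u) = 0) ∧ (∀ j, sv z j = 0) := by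
  rw [mulVec_zero_iff hn]
  constructor
  · rintro ⟨hz1, hz2⟩
    have htne : ∀ j, j ≠ lst hh → tv z j = 0 := fun j hj => tv_zero_of_ne hh hm z hz1 hz2 j hj
    have htl : tv z (lst hh) = 0 := by
      have := tv_lst_mul hh z hz1 hz2
      have h2 : (2 : ℝ) ≤ (m (lst hh) : ℕ) := by
        have := hm (lst hh)
        have : 2 ≤ m (lst hh) := by omega
        exact_mod_cast this
      nlinarith
    have ht : ∀ i, tv z i = 0 := fun i => by
      by_cases hi : i = lst hh
      · rw [hi]; exact htl
      · exact htne i hi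
    refine ⟨?_, fun j => sv_zero_of_tv z ht j⟩
    rintro ⟨i, a⟩
    have := hz1 i a
    rw [ht i] at this
    linarith
  · rintro ⟨hz1, hz2⟩
    have ht : ∀ i, tv z i = 0 := fun i => by
      rw [tv]; exact Finset.sum_eq_zero fun j _ => by rw [hz2 j]; simp
    have hr : ∀ i, rv z i = 0 := fun i => by
      rw [rv]; exact Finset.sum_eq_zero fun a _ => hz1 ⟨i, a⟩
    constructor
    · intro i a; rw [hz1 ⟨i, a⟩, ht i]; ring
    · intro j
      have hq : qv z j = 0 := by
        rw [qv]; exact Finset.sum_eq_zero fun i _ => by rw [hr i]; simp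
      have htt : tot z = 0 := by
        rw [tot]; exact Finset.sum_eq_zero fun j' _ => hz2 j'
      rw [hq, htt]; ring

lemma kerB_iff (hh : 0 < h) (hm : ∀ i, 1 ≤ m i) (hn : ∀ j, 1 ≤ n j)
    (hm1 : m (lst hh) = 1) (z : Wt h m n → ℝ) :
    ((NSG h m n).adjMatrix ℝ + 1) *ᵥ z = 0
      ↔ (∀ i (a : Fin (m i)),
            z (Sum.inl ⟨i, a⟩) + (if i = lst hh then sv z (lst hh) else 0) = 0)
        ∧ (∀ j, j ≠ lst hh → sv z j = 0) := by
  rw [mulVec_zero_iff hn]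
  constructor
  · rintro ⟨hz1, hz2⟩
    have htne : ∀ j, j ≠ lst hh → tv z j = 0 := fun j hj => tv_zero_of_ne hh hm z hz1 hz2 j hj
    have hsne : ∀ j, j ≠ lst hh → sv z j = 0 := fun j hj => sv_zero_of_tv' hh z htne j hj
    have htl : tv z (lst hh) = sv z (lst hh) := by
      rw [tv_eq z (lst hh)]
      have h0 : (∑ j' : Fin h, if j' < lst hh then sv z j' else 0) = 0 :=
        Finset.sum_eq_zero fun j' _ => by
          split_ifs with hlt
          · exact hsne j' (ne_of_lt hlt)
          · rfl
      rw [h0]; ring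
    refine ⟨?_, hsne⟩
    intro i a
    by_cases hi : i = lst hh
    · subst hi
      rw [if_pos rfl, ← htl]
      exact hz1 _ a
    · rw [if_neg hi]
      have := hz1 i a
      rw [htne i hi] at this
      linarith
  · rintro ⟨hz1, hz2⟩
    have ht : ∀ i, tv z i = if i = lst hh then sv z (lst hh) else 0 := by
      intro i
      rw [tv, Fintype.sum_eq_single (lst hh) (fun j hj => by rw [hz2 j hj]; simp)]
      exact if_congr (lst_le_iff hh i) rfl rfl
    constructor
    · intro i a
      rw [ht i]; exact hz1 i a
    · intro j
      have hrv : ∀ i, rv z i = if i = lst hh then -(sv z (lst hh)) else 0 := by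
        intro i
        rw [rv]
        have hzv : ∀ a : Fin (m i),
            z (Sum.inl ⟨i, a⟩) = -(if i = lst hh then sv z (lst hh) else 0) :=
          fun a => by linarith [hz1 i a]
        rw [Finset.sum_congr rfl fun a _ => hzv a]
        by_cases hi : i = lst hh
        · subst hi; simp [hm1]
        · simp [hi]
      have hq : qv z j = -(sv z (lst hh)) := by
        rw [qv, Fintype.sum_eq_single (lst hh) (fun i hi => by rw [hrv i, if_neg hi]; simp)]
        rw [if_pos (le_lst hh j), hrv, if_pos rfl]
      have htt : tot z = sv z (lst hh) := by
        rw [tot, Fintype.sum_eq_single (lst hh) (fun j' hj' => hz2 j' hj')]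
      rw [hq, htt]; ring

lemma ker_LA (hh : 0 < h) (hm : ∀ i, 1 ≤ m i) (hn : ∀ j, 1 ≤ n j)
    (hm2 : m (lst hh) ≠ 1) :
    LinearMap.ker (Matrix.toLin' ((NSG h m n).adjMatrix ℝ - (-1 : ℝ) • 1))
      = LinearMap.ker (LA (h := h) (m := m) (n := n)) := by
  have hM : ((NSG h m n).adjMatrix ℝ - (-1 : ℝ) • 1) = (NSG h m n).adjMatrix ℝ + 1 := by
    rw [neg_smul, one_smul, sub_neg_eq_add]
  rw [hM]
  ext z
  rw [LinearMap.mem_ker, LinearMap.mem_ker, Matrix.toLin'_apply, kerA_iff hh hm hn hm2]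
  constructor
  · rintro ⟨h1, h2⟩
    refine Prod.ext ?_ ?_ <;> funext w
    · exact h1 w
    · exact h2 w
  · intro hz
    have h1 := congrArg Prod.fst hz
    have h2 := congrArg Prod.snd hz
    exact ⟨fun u => congrFun h1 u, fun j => congrFun h2 j⟩

lemma ker_LB (hh : 0 < h) (hm : ∀ i, 1 ≤ m i) (hn : ∀ j, 1 ≤ n j)
    (hm1 : m (lst hh) = 1) :
    LinearMap.ker (Matrix.toLin' ((NSG h m n).adjMatrix ℝ - (-1 : ℝ) • 1))
      = LinearMap.ker (LB (h := h) (m := m) (n := n) hh) := by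
  have hM : ((NSG h m n).adjMatrix ℝ - (-1 : ℝ) • 1) = (NSG h m n).adjMatrix ℝ + 1 := by
    rw [neg_smul, one_smul, sub_neg_eq_add]
  rw [hM]
  ext z
  rw [LinearMap.mem_ker, LinearMap.mem_ker, Matrix.toLin'_apply, kerB_iff hh hm hn hm1]
  constructor
  · rintro ⟨h1, h2⟩
    refine Prod.ext ?_ ?_ <;> funext w
    · obtain ⟨i, a⟩ := w; exact h1 i a
    · exact h2 w.1 w.2
  · intro hz
    have h1 := congrArg Prod.fst hz
    have h2 := congrArg Prod.snd hz
    exact ⟨fun i a => congrFun h1 ⟨i, a⟩, fun j hj => congrFun h2 ⟨j, hj⟩⟩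

end matrixlemmas
end NSGproof

theorem nsg_mult_neg_one (h : ℕ) (hh : 1 ≤ h) (m n : Fin h → ℕ)
    (hm : ∀ i, 1 ≤ m i) (hn : ∀ i, 1 ≤ n i) :
    (NSG h m n).eigMult (-1) =
      if m ⟨h - 1, by omega⟩ = 1 then (∑ i : Fin h, (n i - 1)) + 1
      else ∑ i : Fin h, (n i - 1) := by
  classical
  open NSGproof in
  have hh0 : 0 < h := hh
  have hlst : (⟨h - 1, by omega⟩ : Fin h) = lst hh0 := rfl
  rw [SimpleGraph.eigMult]
  rw [hlst]
  -- card computations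
  have hcardW : Module.finrank ℝ (Wt h m n → ℝ)
      = Fintype.card (Σ i : Fin h, Fin (m i)) + ∑ j : Fin h, n j := by
    rw [Module.finrank_pi, Fintype.card_sum, Fintype.card_sigma]
    simp
  have hsum : (∑ i : Fin h, (n i - 1)) + h = ∑ j : Fin h, n j := by
    have h1 : ∑ j : Fin h, n j = ∑ i : Fin h, ((n i - 1) + 1) :=
      Finset.sum_congr rfl fun i _ => by have := hn i; omega
    rw [h1, Finset.sum_add_distrib]
    simp
  by_cases hc : m (lst hh0) = 1
  · rw [if_pos hc,
      @ker_LB h m n (Classical.decEq _) (Classical.decRel _) hh0 hm hn hc]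
    have hrn := LinearMap.finrank_range_add_finrank_ker (LB (h := h) (m := m) (n := n) hh0)
    rw [LinearMap.range_eq_top.mpr (LB_surj hh0 hn), finrank_top] at hrn
    have hcod : Module.finrank ℝ
        (((Σ i : Fin h, Fin (m i)) → ℝ) × ({j : Fin h // j ≠ lst hh0} → ℝ))
        = Fintype.card (Σ i : Fin h, Fin (m i)) + (h - 1) := by
      rw [Module.finrank_prod, Module.finrank_pi, Module.finrank_pi]
      congr 1
      have := Fintype.card_subtype_compl (fun j : Fin h => j = lst hh0)
      simp only [Fintype.card_subtype_eq, Fintype.card_fin] at this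
      simpa using this
    rw [hcod, hcardW] at hrn
    have hker : Module.finrank ℝ
        (LinearMap.ker (LB (h := h) (m := m) (n := n) hh0))
        = (∑ i : Fin h, (n i - 1)) + 1 := by omega
    exact hker
  · rw [if_neg hc,
      @ker_LA h m n (Classical.decEq _) (Classical.decRel _) hh0 hm hn hc]
    have hrn := LinearMap.finrank_range_add_finrank_ker (LA (h := h) (m := m) (n := n))
    rw [LinearMap.range_eq_top.mpr (LA_surj hn), finrank_top] at hrn
    have hcod : Module.finrank ℝ (((Σ i : Fin h, Fin (m i)) → ℝ) × (Fin h → ℝ))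
        = Fintype.card (Σ i : Fin h, Fin (m i)) + h := by
      rw [Module.finrank_prod, Module.finrank_pi, Module.finrank_pi, Fintype.card_fin]
    rw [hcod, hcardW] at hrn
    have hker : Module.finrank ℝ
        (LinearMap.ker (LA (h := h) (m := m) (n := n)))
        = ∑ i : Fin h, (n i - 1) := by omega
    exact hker
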